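/- arXiv:2511.22217 — 7 statements merged into one kernel-verified Lean document; each statement's English description precedes it below -/
import Mathlib

section
/- In the score-threshold routing model, for every τ ∈ ℝ with f(τ) > 0 and ΔC(τ) ≠ 0, the frontier slope identity holds: Q′(τ) / C′(τ) = ΔQ(τ) / ΔC(τ) = ρ(τ). -/
open MeasureTheory Set

lemma key_hasDerivAt (G H : ℝ → ℝ) (hGc : Continuous G) (hHc : Continuous H)
    (hG : Integrable G) (hH : Integrable H) (τ : ℝ) :
    HasDerivAt (fun t => (∫ s in Ioi t, G s) + ∫ s in Iio t, H s) (H τ - G τ) τ := by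
  have heq : (fun t => (∫ s in Ioi t, G s) + ∫ s in Iio t, H s)
      = fun t => ((∫ s, G s) - (∫ s in Iic (0:ℝ), G s) - ∫ s in (0:ℝ)..t, G s)
        + ((∫ s in Iic (0:ℝ), H s) + ∫ s in (0:ℝ)..t, H s) := by
    funext t
    have h1 : (∫ s in Iic t, G s) + ∫ s in Ioi t, G s = ∫ s, G s :=
      intervalIntegral.integral_Iic_add_Ioi hG.integrableOn hG.integrableOn
    have h2 : (∫ s in Iic t, G s) - ∫ s in Iic (0:ℝ), G s = ∫ s in (0:ℝ)..t, G s :=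
      intervalIntegral.integral_Iic_sub_Iic hG.integrableOn hG.integrableOn
    have h3 : (∫ s in Iic t, H s) - ∫ s in Iic (0:ℝ), H s = ∫ s in (0:ℝ)..t, H s :=
      intervalIntegral.integral_Iic_sub_Iic hH.integrableOn hH.integrableOn
    have h4 : (∫ s in Iic t, H s) = ∫ s in Iio t, H s := integral_Iic_eq_integral_Iio
    rw [← h4]
    linarith
  rw [heq]
  have hdG : HasDerivAt (fun t => ∫ s in (0:ℝ)..t, G s) (G τ) τ :=
    intervalIntegral.integral_hasDerivAt_right (hGc.intervalIntegrable _ _)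
      hGc.aestronglyMeasurable.stronglyMeasurableAtFilter hGc.continuousAt
  have hdH : HasDerivAt (fun t => ∫ s in (0:ℝ)..t, H s) (H τ) τ :=
    intervalIntegral.integral_hasDerivAt_right (hHc.intervalIntegrable _ _)
      hHc.aestronglyMeasurable.stronglyMeasurableAtFilter hHc.continuousAt
  have := (((hasDerivAt_const τ ((∫ s, G s) - ∫ s in Iic (0:ℝ), G s)).sub hdG).add
    ((hasDerivAt_const τ (∫ s in Iic (0:ℝ), H s)).add hdH))
  exact this.congr_deriv (by ring)

/-- Frontier slope identity.  In the score-threshold routing model,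
for every `τ` with `f(τ) > 0` and `ΔC(τ) ≠ 0`,
`Q'(τ) / C'(τ) = ΔQ(τ) / ΔC(τ) = ρ(τ)`. -/
theorem stmt_1 (f qE qC cE cC : ℝ → ℝ)
    (hf : Continuous f) (hf0 : ∀ s, 0 ≤ f s) (hfprob : (∫ s, f s) = 1)
    (hqE : Continuous qE) (hqC : Continuous qC)
    (hcE : Continuous cE) (hcC : Continuous cC)
    (hIqE : Integrable (fun s => qE s * f s))
    (hIqC : Integrable (fun s => qC s * f s))
    (hIcE : Integrable (fun s => cE s * f s))
    (hIcC : Integrable (fun s => cC s * f s))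
    (τ : ℝ) (hfτ : 0 < f τ) (hΔCτ : cC τ - cE τ ≠ 0) :
    deriv (fun τ => (∫ s in Ioi τ, qE s * f s) + ∫ s in Iio τ, qC s * f s) τ /
      deriv (fun τ => (∫ s in Ioi τ, cE s * f s) + ∫ s in Iio τ, cC s * f s) τ
    = (qC τ - qE τ) / (cC τ - cE τ) := by
  have hQ := (key_hasDerivAt (fun s => qE s * f s) (fun s => qC s * f s) (hqE.mul hf) (hqC.mul hf) hIqE hIqC τ).deriv
  have hC := (key_hasDerivAt (fun s => cE s * f s) (fun s => cC s * f s) (hcE.mul hf) (hcC.mul hf) hIcE hIcC τ).deriv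
  rw [hQ, hC]
  rw [show qC τ * f τ - qE τ * f τ = (qC τ - qE τ) * f τ by ring,
    show cC τ * f τ - cE τ * f τ = (cC τ - cE τ) * f τ by ring,
    mul_div_mul_right _ _ hfτ.ne']
end

section
/- In the score-threshold routing model with f(s) > 0 and ΔC(s) > 0 for all s, the sign of J′(τ) equals the sign of ρ(τ) − λ for every τ ∈ ℝ: J′(τ) > 0 if and only if ρ(τ) > λ, J′(τ) = 0 if and only if ρ(τ) = λ, and J′(τ) < 0 if and only if ρ(τ) < λ. -/
open MeasureTheory Set

lemma aux_hasDeriv (g : ℝ → ℝ) (hg : Continuous g) (hInt : Integrable g) (x : ℝ) :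
    HasDerivAt (fun τ => ∫ t in Iic τ, g t) (g x) x := by
  have heq : ∀ τ : ℝ, ∫ t in Iic τ, g t = (∫ t in Iic (0:ℝ), g t) + ∫ t in (0:ℝ)..τ, g t := by
    intro τ
    rw [← intervalIntegral.integral_Iic_sub_Iic (hInt.integrableOn) (hInt.integrableOn)]
    ring
  have h := intervalIntegral.integral_hasDerivAt_right
    (hg.intervalIntegrable 0 x)
    (hg.stronglyMeasurableAtFilter _ _)
    hg.continuousAt
  have := (h.const_add (∫ t in Iic (0:ℝ), g t))
  simpa [← heq] using this

lemma aux_split (g : ℝ → ℝ) (hInt : Integrable g) (τ : ℝ) :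
    (∫ t in Ioi τ, g t) = (∫ t, g t) - ∫ t in Iic τ, g t := by
  have := integral_add_compl (measurableSet_Iic (a := τ)) hInt
  rw [compl_Iic] at this
  linarith

/-- With `f > 0` and `ΔC > 0` everywhere, the sign of `J'(τ)` equals the
sign of `ρ(τ) − λ`: `J'(τ) > 0 ↔ ρ(τ) > λ`, `J'(τ) = 0 ↔ ρ(τ) = λ`, and
`J'(τ) < 0 ↔ ρ(τ) < λ`. -/
theorem stmt_3 (f qE qC cE cC : ℝ → ℝ) (lam : ℝ) (hlam : 0 < lam)
    (hf : Continuous f) (hfpos : ∀ s, 0 < f s) (hfprob : (∫ s, f s) = 1)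
    (hqE : Continuous qE) (hqC : Continuous qC)
    (hcE : Continuous cE) (hcC : Continuous cC)
    (hIqE : Integrable (fun s => qE s * f s))
    (hIqC : Integrable (fun s => qC s * f s))
    (hIcE : Integrable (fun s => cE s * f s))
    (hIcC : Integrable (fun s => cC s * f s))
    (hΔC : ∀ s, 0 < cC s - cE s) :
    ∀ τ : ℝ,
      (0 < deriv (fun τ => ((∫ s in Ioi τ, qE s * f s) + ∫ s in Iio τ, qC s * f s)
          - lam * ((∫ s in Ioi τ, cE s * f s) + ∫ s in Iio τ, cC s * f s)) τ
        ↔ lam < (qC τ - qE τ) / (cC τ - cE τ))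
      ∧ (deriv (fun τ => ((∫ s in Ioi τ, qE s * f s) + ∫ s in Iio τ, qC s * f s)
          - lam * ((∫ s in Ioi τ, cE s * f s) + ∫ s in Iio τ, cC s * f s)) τ = 0
        ↔ (qC τ - qE τ) / (cC τ - cE τ) = lam)
      ∧ (deriv (fun τ => ((∫ s in Ioi τ, qE s * f s) + ∫ s in Iio τ, qC s * f s)
          - lam * ((∫ s in Ioi τ, cE s * f s) + ∫ s in Iio τ, cC s * f s)) τ < 0
        ↔ (qC τ - qE τ) / (cC τ - cE τ) < lam) := by
  intro τ
  have hfeq : (fun τ : ℝ => ((∫ s in Ioi τ, qE s * f s) + ∫ s in Iio τ, qC s * f s)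
          - lam * ((∫ s in Ioi τ, cE s * f s) + ∫ s in Iio τ, cC s * f s))
      = fun τ : ℝ => (((∫ s, qE s * f s) - ∫ s in Iic τ, qE s * f s) + ∫ s in Iic τ, qC s * f s)
          - lam * (((∫ s, cE s * f s) - ∫ s in Iic τ, cE s * f s) + ∫ s in Iic τ, cC s * f s) := by
    funext x
    rw [aux_split _ hIqE, aux_split _ hIcE,
      ← integral_Iic_eq_integral_Iio, ← integral_Iic_eq_integral_Iio]
  have hD : HasDerivAt (fun τ : ℝ => (((∫ s, qE s * f s) - ∫ s in Iic τ, qE s * f s)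
          + ∫ s in Iic τ, qC s * f s)
          - lam * (((∫ s, cE s * f s) - ∫ s in Iic τ, cE s * f s) + ∫ s in Iic τ, cC s * f s))
      ((((0:ℝ) - qE τ * f τ) + qC τ * f τ) - lam * (((0:ℝ) - cE τ * f τ) + cC τ * f τ)) τ := by
    exact (((( (hasDerivAt_const τ (∫ s, qE s * f s)).sub
        (aux_hasDeriv _ (hqE.mul hf) hIqE τ)).add
        (aux_hasDeriv _ (hqC.mul hf) hIqC τ))).sub
      (((((hasDerivAt_const τ (∫ s, cE s * f s)).sub
        (aux_hasDeriv _ (hcE.mul hf) hIcE τ)).add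
        (aux_hasDeriv _ (hcC.mul hf) hIcC τ))).const_mul lam))
  have hderiv : deriv (fun τ : ℝ => ((∫ s in Ioi τ, qE s * f s) + ∫ s in Iio τ, qC s * f s)
          - lam * ((∫ s in Ioi τ, cE s * f s) + ∫ s in Iio τ, cC s * f s)) τ
      = f τ * ((qC τ - qE τ) - lam * (cC τ - cE τ)) := by
    rw [hfeq, hD.deriv]; ring
  rw [hderiv]
  have hF : 0 < f τ := hfpos τ
  have hD0 : 0 < cC τ - cE τ := hΔC τ
  refine ⟨?_, ?_, ?_⟩
  · rw [lt_div_iff₀ hD0]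
    constructor <;> intro h <;> nlinarith
  · rw [div_eq_iff hD0.ne']
    constructor
    · intro h
      have hx : (qC τ - qE τ) - lam * (cC τ - cE τ) = 0 :=
        (mul_eq_zero.1 h).resolve_left hF.ne'
      linarith
    · intro h
      have hx : (qC τ - qE τ) - lam * (cC τ - cE τ) = 0 := by linarith
      rw [hx, mul_zero]
  · rw [div_lt_iff₀ hD0]
    constructor <;> intro h <;> nlinarith
end

section
/- In the score-threshold routing model, suppose f(s) > 0 and ΔC(s) > 0 for all s, ρ is continuous and strictly decreasing, and τ* ∈ ℝ satisfies ρ(τ*) = λ. Then τ* is the unique global maximizer of the utility J: J is strictly increasing on (−∞, τ*], strictly decreasing on [τ*, ∞), and J(τ) < J(τ*) for every τ ≠ τ*. -/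
open MeasureTheory Set

/-- If `f > 0`, `ΔC > 0`, `ρ` is continuous and strictly decreasing, and
`ρ(τ*) = λ`, then `τ*` is the unique global maximizer of `J`: `J` is strictly increasing
on `(−∞, τ*]`, strictly decreasing on `[τ*, ∞)`, and `J(τ) < J(τ*)` for every `τ ≠ τ*`. -/
theorem stmt_5 (f qE qC cE cC : ℝ → ℝ) (lam : ℝ) (hlam : 0 < lam)
    (hf : Continuous f) (hfpos : ∀ s, 0 < f s) (hfprob : (∫ s, f s) = 1)
    (hqE : Continuous qE) (hqC : Continuous qC)
    (hcE : Continuous cE) (hcC : Continuous cC)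
    (hIqE : Integrable (fun s => qE s * f s))
    (hIqC : Integrable (fun s => qC s * f s))
    (hIcE : Integrable (fun s => cE s * f s))
    (hIcC : Integrable (fun s => cC s * f s))
    (hΔC : ∀ s, 0 < cC s - cE s)
    (hρcont : Continuous (fun s => (qC s - qE s) / (cC s - cE s)))
    (hρanti : StrictAnti (fun s => (qC s - qE s) / (cC s - cE s)))
    (τstar : ℝ) (hτstar : (qC τstar - qE τstar) / (cC τstar - cE τstar) = lam) :
    let J : ℝ → ℝ := fun τ =>
      ((∫ s in Ioi τ, qE s * f s) + ∫ s in Iio τ, qC s * f s)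
        - lam * ((∫ s in Ioi τ, cE s * f s) + ∫ s in Iio τ, cC s * f s)
    StrictMonoOn J (Iic τstar) ∧ StrictAntiOn J (Ici τstar)
      ∧ ∀ τ : ℝ, τ ≠ τstar → J τ < J τstar := by
  intro J
  set g : ℝ → ℝ := fun s => ((qC s - qE s) - lam * (cC s - cE s)) * f s with hg
  have hIg : Integrable g := by
    have : Integrable (fun s => ((fun s => qC s * f s) s - (fun s => qE s * f s) s)
        - lam * ((fun s => cC s * f s) s - (fun s => cE s * f s) s)) :=
      (hIqC.sub hIqE).sub (((hIcC.sub hIcE)).const_mul lam)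
    refine this.congr (Filter.Eventually.of_forall fun s => ?_)
    simp only [hg]; ring
  -- rewrite Ioi integrals via total minus Iic
  have ioi : ∀ (h : ℝ → ℝ), Integrable h → ∀ τ : ℝ,
      (∫ s in Ioi τ, h s) = (∫ s, h s) - ∫ s in Iic τ, h s := by
    intro h hh τ
    have := intervalIntegral.integral_Iic_add_Ioi (b := τ) hh.integrableOn hh.integrableOn
    linarith
  have Jeq : ∀ τ : ℝ, J τ =
      ((∫ s, qE s * f s) - lam * ∫ s, cE s * f s)
      + ((∫ s in Iic τ, ((qC s - qE s) * f s))
         - lam * ∫ s in Iic τ, ((cC s - cE s) * f s)) := by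
    intro τ
    have h1 : (∫ s in Iic τ, (qC s - qE s) * f s)
        = (∫ s in Iic τ, qC s * f s) - ∫ s in Iic τ, qE s * f s := by
      rw [← integral_sub hIqC.integrableOn hIqE.integrableOn]
      exact integral_congr_ae (Filter.Eventually.of_forall fun s => by ring)
    have h2 : (∫ s in Iic τ, (cC s - cE s) * f s)
        = (∫ s in Iic τ, cC s * f s) - ∫ s in Iic τ, cE s * f s := by
      rw [← integral_sub hIcC.integrableOn hIcE.integrableOn]
      exact integral_congr_ae (Filter.Eventually.of_forall fun s => by ring)
    show ((∫ s in Ioi τ, qE s * f s) + ∫ s in Iio τ, qC s * f s)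
        - lam * ((∫ s in Ioi τ, cE s * f s) + ∫ s in Iio τ, cC s * f s) = _
    rw [ioi _ hIqE τ, ioi _ hIcE τ,
      ← integral_Iic_eq_integral_Iio (f := fun s => qC s * f s),
      ← integral_Iic_eq_integral_Iio (f := fun s => cC s * f s), h1, h2]
    ring
  have hIqd : Integrable (fun s => (qC s - qE s) * f s) := by
    refine (hIqC.sub hIqE).congr (Filter.Eventually.of_forall fun s => ?_); simp only [Pi.sub_apply]; ring
  have hIcd : Integrable (fun s => (cC s - cE s) * f s) := by
    refine (hIcC.sub hIcE).congr (Filter.Eventually.of_forall fun s => ?_); simp only [Pi.sub_apply]; ring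
  have key : ∀ a b : ℝ, J b - J a = ∫ s in a..b, g s := by
    intro a b
    rw [Jeq a, Jeq b]
    have e1 := intervalIntegral.integral_Iic_sub_Iic (f := fun s => (qC s - qE s) * f s) (μ := volume)
      (a := a) (b := b) hIqd.integrableOn hIqd.integrableOn
    have e2 := intervalIntegral.integral_Iic_sub_Iic (f := fun s => (cC s - cE s) * f s) (μ := volume)
      (a := a) (b := b) hIcd.integrableOn hIcd.integrableOn
    have e3 : (∫ s in a..b, g s)
        = (∫ s in a..b, (qC s - qE s) * f s) - lam * ∫ s in a..b, (cC s - cE s) * f s := by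
      rw [← intervalIntegral.integral_const_mul,
        ← intervalIntegral.integral_sub hIqd.intervalIntegrable
          (hIcd.intervalIntegrable.const_mul lam)]
      exact intervalIntegral.integral_congr fun s _ => by simp [hg]; ring
    rw [e3, ← e1, ← e2]; ring
  -- sign of g
  have gpos : ∀ s, s < τstar → 0 < g s := by
    intro s hs
    have hρ : lam < (qC s - qE s) / (cC s - cE s) := hτstar ▸ hρanti hs
    have h1 : lam * (cC s - cE s) < qC s - qE s := by
      rw [lt_div_iff₀ (hΔC s)] at hρ; linarith
    exact mul_pos (by linarith) (hfpos s)
  have gneg : ∀ s, τstar < s → g s < 0 := by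
    intro s hs
    have hρ : (qC s - qE s) / (cC s - cE s) < lam := hτstar ▸ hρanti hs
    have h1 : qC s - qE s < lam * (cC s - cE s) := by
      rw [div_lt_iff₀ (hΔC s)] at hρ; linarith
    have : ((qC s - qE s) - lam * (cC s - cE s)) < 0 := by linarith
    exact mul_neg_of_neg_of_pos this (hfpos s)
  have mono : StrictMonoOn J (Iic τstar) := by
    intro a _ b hb hab
    have : 0 < ∫ s in a..b, g s := by
      refine intervalIntegral.intervalIntegral_pos_of_pos_on
        hIg.intervalIntegrable (fun x hx => ?_) hab
      exact gpos x (lt_of_lt_of_le hx.2 hb)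
    have := key a b; linarith
  have anti : StrictAntiOn J (Ici τstar) := by
    intro a ha b _ hab
    have : 0 < ∫ s in a..b, -g s := by
      refine intervalIntegral.intervalIntegral_pos_of_pos_on
        (hIg.neg.intervalIntegrable) (fun x hx => ?_) hab
      simpa using gneg x (lt_of_le_of_lt ha hx.1)
    rw [intervalIntegral.integral_neg] at this
    have := key a b; linarith
  refine ⟨mono, anti, fun τ hτ => ?_⟩
  rcases lt_or_gt_of_ne hτ with h | h
  · exact mono (mem_Iic.mpr h.le) (mem_Iic.mpr le_rfl) h
  · exact anti (mem_Ici.mpr le_rfl) (mem_Ici.mpr h.le) h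
end

section
/- In the score-threshold routing model, define the pointwise edge utility uE(s) = qE(s) − λ·cE(s) and cloud utility uC(s) = qC(s) − λ·cC(s). Then uC(s) − uE(s) = ΔC(s)·(ρ(s) − λ) for all s; consequently, if ΔC(s) > 0 for all s, ρ is strictly decreasing, and ρ(τ*) = λ, then uC(s) > uE(s) for every s < τ* and uC(s) < uE(s) for every s > τ* (single-crossing of the cloud–edge utility gap at τ*). -/
open Set

/-- With `uE(s) = qE(s) − λ·cE(s)` and `uC(s) = qC(s) − λ·cC(s)`,
`uC(s) − uE(s) = ΔC(s)·(ρ(s) − λ)` for all `s`; hence if `ΔC > 0`, `ρ` is strictly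
decreasing, and `ρ(τ*) = λ`, then `uC > uE` left of `τ*` and `uC < uE` right of `τ*`
(single-crossing of the cloud–edge utility gap at `τ*`). -/
theorem stmt_6 (qE qC cE cC : ℝ → ℝ) (lam : ℝ) (hlam : 0 < lam)
    (hΔC : ∀ s, 0 < cC s - cE s)
    (hρanti : StrictAnti (fun s => (qC s - qE s) / (cC s - cE s)))
    (τstar : ℝ) (hτstar : (qC τstar - qE τstar) / (cC τstar - cE τstar) = lam) :
    (∀ s : ℝ, (qC s - lam * cC s) - (qE s - lam * cE s)
        = (cC s - cE s) * ((qC s - qE s) / (cC s - cE s) - lam))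
    ∧ (∀ s : ℝ, s < τstar → qE s - lam * cE s < qC s - lam * cC s)
    ∧ (∀ s : ℝ, τstar < s → qC s - lam * cC s < qE s - lam * cE s) := by
  have key : ∀ s : ℝ, (qC s - lam * cC s) - (qE s - lam * cE s)
      = (cC s - cE s) * ((qC s - qE s) / (cC s - cE s) - lam) := by
    intro s
    have h := (hΔC s).ne'
    field_simp
    ring
  refine ⟨key, ?_, ?_⟩
  · intro s hs
    have hρ : lam < (qC s - qE s) / (cC s - cE s) := hτstar ▸ hρanti hs
    nlinarith [key s, hΔC s]
  · intro s hs
    have hρ : (qC s - qE s) / (cC s - cE s) < lam := hτstar ▸ hρanti hs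
    nlinarith [key s, hΔC s]
end

section
/- In the score-threshold routing model, suppose ΔC(s) > 0 for all s, ρ is strictly decreasing, and τ* ∈ ℝ satisfies ρ(τ*) = λ. Then the threshold policy at τ* is optimal among all measurable score-based policies: for every measurable set A ⊆ ℝ (the set of scores routed to the cloud) for which the integral exists, ∫_ℝ [1_A(s)·(qC(s) − λ·cC(s)) + 1_{Aᶜ}(s)·(qE(s) − λ·cE(s))] f(s) ds ≤ J(τ*), where J(τ*) is the utility of the policy that routes to the cloud exactly when s < τ*. -/
open MeasureTheory Set

/-- Optimality of the threshold policy among all measurable score-based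
policies: if `ΔC > 0`, `ρ` is strictly decreasing, and `ρ(τ*) = λ`, then for every
measurable cloud-routing set `A` whose policy integral exists,
`∫ [1_A·(qC − λcC) + 1_{Aᶜ}·(qE − λcE)]·f ≤ J(τ*)`. -/
theorem stmt_7 (f qE qC cE cC : ℝ → ℝ) (lam : ℝ) (hlam : 0 < lam)
    (hf : Continuous f) (hfpos : ∀ s, 0 < f s) (hfprob : (∫ s, f s) = 1)
    (hqE : Continuous qE) (hqC : Continuous qC)
    (hcE : Continuous cE) (hcC : Continuous cC)
    (hIqE : Integrable (fun s => qE s * f s))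
    (hIqC : Integrable (fun s => qC s * f s))
    (hIcE : Integrable (fun s => cE s * f s))
    (hIcC : Integrable (fun s => cC s * f s))
    (hΔC : ∀ s, 0 < cC s - cE s)
    (hρanti : StrictAnti (fun s => (qC s - qE s) / (cC s - cE s)))
    (τstar : ℝ) (hτstar : (qC τstar - qE τstar) / (cC τstar - cE τstar) = lam)
    (A : Set ℝ) (hA : MeasurableSet A)
    (hInt : Integrable (fun s =>
      (A.indicator (fun s => qC s - lam * cC s) s
        + Aᶜ.indicator (fun s => qE s - lam * cE s) s) * f s)) :
    (∫ s, (A.indicator (fun s => qC s - lam * cC s) s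
        + Aᶜ.indicator (fun s => qE s - lam * cE s) s) * f s)
      ≤ (∫ s in Ioi τstar, (qE s - lam * cE s) * f s)
        + ∫ s in Iio τstar, (qC s - lam * cC s) * f s := by
  set h : ℝ → ℝ := fun s => (qE s - lam * cE s) * f s with hh
  set g : ℝ → ℝ := fun s => ((qC s - lam * cC s) - (qE s - lam * cE s)) * f s with hg
  have hIh : Integrable h := by
    have : h = fun s => qE s * f s - lam • (cE s * f s) := by
      funext s; simp [hh, smul_eq_mul]; ring
    rw [this]; exact hIqE.sub (hIcE.smul lam)
  have hIg : Integrable g := by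
    have : g = fun s => (qC s * f s - lam • (cC s * f s))
        - (qE s * f s - lam • (cE s * f s)) := by
      funext s; simp [hg, smul_eq_mul]; ring
    rw [this]; exact ((hIqC.sub (hIcC.smul lam)).sub (hIqE.sub (hIcE.smul lam)))
  -- sign of g
  have hgpos : ∀ s < τstar, 0 ≤ g s := by
    intro s hs
    have hρ : lam < (qC s - qE s) / (cC s - cE s) := hτstar ▸ hρanti hs
    have := (lt_div_iff₀ (hΔC s)).mp hρ
    have hnum : 0 ≤ (qC s - lam * cC s) - (qE s - lam * cE s) := by nlinarith
    exact mul_nonneg hnum (hfpos s).le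
  have hgneg : ∀ s, τstar ≤ s → g s ≤ 0 := by
    intro s hs
    have hρ : (qC s - qE s) / (cC s - cE s) ≤ lam := hτstar ▸ hρanti.antitone hs
    have := (div_le_iff₀ (hΔC s)).mp hρ
    have hnum : (qC s - lam * cC s) - (qE s - lam * cE s) ≤ 0 := by nlinarith
    exact mul_nonpos_of_nonpos_of_nonneg hnum (hfpos s).le
  -- rewrite LHS
  have hLHS : (∫ s, (A.indicator (fun s => qC s - lam * cC s) s
        + Aᶜ.indicator (fun s => qE s - lam * cE s) s) * f s)
      = (∫ s, h s) + ∫ s in A, g s := by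
    have heq : (fun s => (A.indicator (fun s => qC s - lam * cC s) s
        + Aᶜ.indicator (fun s => qE s - lam * cE s) s) * f s)
        = fun s => h s + A.indicator g s := by
      funext s
      by_cases hs : s ∈ A <;> simp [hh, hg, hs, indicator_of_mem, indicator_of_notMem] <;> ring
    rw [heq, integral_add hIh (hIg.indicator hA), integral_indicator hA]
  -- rewrite RHS
  have hIioIic : (∫ s in Iio τstar, h s) = ∫ s in Iic τstar, h s :=
    setIntegral_congr_set Iio_ae_eq_Iic
  have hRHS : (∫ s in Ioi τstar, (qE s - lam * cE s) * f s)
        + (∫ s in Iio τstar, (qC s - lam * cC s) * f s)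
      = (∫ s, h s) + ∫ s in Iio τstar, g s := by
    have h2 : (∫ s in Iio τstar, (qC s - lam * cC s) * f s)
        = (∫ s in Iio τstar, h s) + ∫ s in Iio τstar, g s := by
      rw [← integral_add (hIh.integrableOn) (hIg.integrableOn)]
      apply setIntegral_congr_fun measurableSet_Iio
      intro s _; simp [hh, hg]; ring
    rw [h2, hIioIic, ← add_assoc, add_comm (∫ s in Ioi τstar, (qE s - lam * cE s) * f s),
      intervalIntegral.integral_Iic_add_Ioi hIh.integrableOn hIh.integrableOn]
  rw [hLHS, hRHS]
  apply add_le_add_right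
  -- ∫_A g ≤ ∫_{Iio τ*} g
  have hsplitA : (∫ s in A, g s)
      = (∫ s in A ∩ Iio τstar, g s) + ∫ s in A \ Iio τstar, g s :=
    (integral_inter_add_diff measurableSet_Iio hIg.integrableOn).symm
  have hsplitP : (∫ s in Iio τstar, g s)
      = (∫ s in Iio τstar ∩ A, g s) + ∫ s in Iio τstar \ A, g s :=
    (integral_inter_add_diff hA hIg.integrableOn).symm
  rw [hsplitA, hsplitP, inter_comm]
  apply add_le_add_right
  calc (∫ s in A \ Iio τstar, g s) ≤ 0 := by
        apply setIntegral_nonpos (hA.diff measurableSet_Iio)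
        intro s hs; exact hgneg s (not_lt.mp hs.2)
    _ ≤ ∫ s in Iio τstar \ A, g s := by
        apply setIntegral_nonneg (measurableSet_Iio.diff hA)
        intro s hs; exact hgpos s hs.1
end

section
/- In the score-threshold routing model with network cost scaling κ > 0, define the state-dependent cost C_κ(τ) = ∫_τ^∞ cE(s) f(s) ds + ∫_{−∞}^τ (cE(s) + κ·ΔC(s)) f(s) ds. Then for every τ with f(τ) > 0 and ΔC(τ) ≠ 0, the state-dependent frontier slope satisfies Q′(τ) / C_κ′(τ) = ρ(τ) / κ; in particular, a smaller κ (a better network state) steepens the attainable quality–cost slope at the same threshold. -/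
open MeasureTheory Set

lemma iio_hasDerivAt (g : ℝ → ℝ) (hg : Continuous g) (hIg : Integrable g) (τ : ℝ) :
    HasDerivAt (fun t => ∫ s in Iio t, g s) (g τ) τ := by
  have heq : (fun t => ∫ s in Iio t, g s)
      = fun t => (∫ s in Iic (0:ℝ), g s) + ∫ s in (0:ℝ)..t, g s := by
    funext t
    rw [← integral_Iic_eq_integral_Iio,
      ← intervalIntegral.integral_Iic_sub_Iic (hIg.integrableOn) (hIg.integrableOn)]
    ring
  rw [heq]
  have : HasDerivAt (fun t => ∫ s in (0:ℝ)..t, g s) (g τ) τ :=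
    intervalIntegral.integral_hasDerivAt_right hIg.intervalIntegrable
      (hg.stronglyMeasurableAtFilter _ _) hg.continuousAt
  exact this.const_add _

lemma ioi_hasDerivAt (g : ℝ → ℝ) (hg : Continuous g) (hIg : Integrable g) (τ : ℝ) :
    HasDerivAt (fun t => ∫ s in Ioi t, g s) (-(g τ)) τ := by
  have heq : (fun t => ∫ s in Ioi t, g s)
      = fun t => (∫ s, g s) - ∫ s in Iio t, g s := by
    funext t
    rw [← integral_Iic_eq_integral_Iio, ← integral_add_compl (measurableSet_Iic (a := t)) hIg]
    simp [compl_Iic]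
  rw [heq]
  exact (iio_hasDerivAt g hg hIg τ).const_sub _

lemma deriv_combo (g h : ℝ → ℝ) (hg : Continuous g) (hh : Continuous h)
    (hIg : Integrable g) (hIh : Integrable h) (τ : ℝ) :
    deriv (fun t => (∫ s in Ioi t, g s) + ∫ s in Iio t, h s) τ = h τ - g τ := by
  have := (ioi_hasDerivAt g hg hIg τ).add (iio_hasDerivAt h hh hIh τ)
  rw [show (fun t => (∫ s in Ioi t, g s) + ∫ s in Iio t, h s) = ((fun t => ∫ s in Ioi t, g s) + fun t => ∫ s in Iio t, h s) from rfl, this.deriv]; ring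

/-- State-dependent frontier slope.  With network cost scaling `κ > 0`
and state-dependent cost `C_κ(τ) = ∫_τ^∞ cE f + ∫_{−∞}^τ (cE + κ·ΔC) f`, for every `τ`
with `f(τ) > 0` and `ΔC(τ) ≠ 0` one has `Q'(τ) / C_κ'(τ) = ρ(τ) / κ`. -/
theorem stmt_10 (f qE qC cE cC : ℝ → ℝ) (κ : ℝ) (hκ : 0 < κ)
    (hf : Continuous f) (hf0 : ∀ s, 0 ≤ f s) (hfprob : (∫ s, f s) = 1)
    (hqE : Continuous qE) (hqC : Continuous qC)
    (hcE : Continuous cE) (hcC : Continuous cC)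
    (hIqE : Integrable (fun s => qE s * f s))
    (hIqC : Integrable (fun s => qC s * f s))
    (hIcE : Integrable (fun s => cE s * f s))
    (hIcC : Integrable (fun s => cC s * f s))
    (hIΔC : Integrable (fun s => (cC s - cE s) * f s))
    (τ : ℝ) (hfτ : 0 < f τ) (hΔCτ : cC τ - cE τ ≠ 0) :
    deriv (fun τ => (∫ s in Ioi τ, qE s * f s) + ∫ s in Iio τ, qC s * f s) τ
      / deriv (fun τ => (∫ s in Ioi τ, cE s * f s)
          + ∫ s in Iio τ, (cE s + κ * (cC s - cE s)) * f s) τ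
    = ((qC τ - qE τ) / (cC τ - cE τ)) / κ := by
  have hI2 : Integrable (fun s => (cE s + κ * (cC s - cE s)) * f s) := by
    have := hIcE.add (hIΔC.const_mul κ)
    refine this.congr (Filter.Eventually.of_forall fun s => ?_); simp only [Pi.add_apply]; ring
  rw [deriv_combo (fun s => qE s * f s) (fun s => qC s * f s) (hqE.mul hf) (hqC.mul hf) hIqE hIqC τ,
    deriv_combo (fun s => cE s * f s) (fun s => (cE s + κ * (cC s - cE s)) * f s) (hcE.mul hf) ((hcE.add (continuous_const.mul (hcC.sub hcE))).mul hf)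
      hIcE hI2 τ]
  have h1 : (cE τ + κ * (cC τ - cE τ)) * f τ - cE τ * f τ = κ * ((cC τ - cE τ) * f τ) := by
    ring
  rw [h1]
  have hfne := hfτ.ne'
  field_simp
end

section
/- In the score-threshold routing model with network cost scaling κ > 0, suppose f(s) > 0 and ΔC(s) > 0 for all s, ρ is continuous and strictly decreasing, and there exists τ*(κ) with ρ(τ*(κ)) = λ·κ. Then τ*(κ) is the unique global maximizer of the state-dependent utility J_κ(τ) = Q(τ) − λ·C_κ(τ), where C_κ(τ) = ∫_τ^∞ cE(s) f(s) ds + ∫_{−∞}^τ (cE(s) + κ·ΔC(s)) f(s) ds, and it is characterized by the first-order balance ΔQ(τ*(κ)) = λ·κ·ΔC(τ*(κ)). -/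
open MeasureTheory Set

/-- With network cost scaling `κ > 0`, `f > 0`, `ΔC > 0`, `ρ` continuous
and strictly decreasing, and `ρ(τ*(κ)) = λ·κ`, the point `τ*(κ)` is the unique global
maximizer of the state-dependent utility `J_κ(τ) = Q(τ) − λ·C_κ(τ)`, and it is
characterized by the first-order balance `ΔQ(τ) = λ·κ·ΔC(τ) ↔ τ = τ*(κ)`. -/
theorem stmt_11 (f qE qC cE cC : ℝ → ℝ) (lam κ : ℝ) (hlam : 0 < lam) (hκ : 0 < κ)
    (hf : Continuous f) (hfpos : ∀ s, 0 < f s) (hfprob : (∫ s, f s) = 1)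
    (hqE : Continuous qE) (hqC : Continuous qC)
    (hcE : Continuous cE) (hcC : Continuous cC)
    (hIqE : Integrable (fun s => qE s * f s))
    (hIqC : Integrable (fun s => qC s * f s))
    (hIcE : Integrable (fun s => cE s * f s))
    (hIcC : Integrable (fun s => cC s * f s))
    (hIΔC : Integrable (fun s => (cC s - cE s) * f s))
    (hΔC : ∀ s, 0 < cC s - cE s)
    (hρcont : Continuous (fun s => (qC s - qE s) / (cC s - cE s)))
    (hρanti : StrictAnti (fun s => (qC s - qE s) / (cC s - cE s)))
    (τstar : ℝ) (hτstar : (qC τstar - qE τstar) / (cC τstar - cE τstar) = lam * κ) :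
    let Cκ : ℝ → ℝ := fun τ =>
      (∫ s in Ioi τ, cE s * f s) + ∫ s in Iio τ, (cE s + κ * (cC s - cE s)) * f s
    let Jκ : ℝ → ℝ := fun τ =>
      ((∫ s in Ioi τ, qE s * f s) + ∫ s in Iio τ, qC s * f s) - lam * Cκ τ
    (∀ τ : ℝ, τ ≠ τstar → Jκ τ < Jκ τstar)
      ∧ (∀ τ : ℝ, qC τ - qE τ = lam * κ * (cC τ - cE τ) ↔ τ = τstar) := by
  intro Cκ Jκ
  set g : ℝ → ℝ := fun s => (qC s - qE s - lam * κ * (cC s - cE s)) * f s with hg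
  have hgcont : Continuous g :=
    (((hqC.sub hqE).sub (continuous_const.mul (hcC.sub hcE)))).mul hf
  have hgint : Integrable g := by
    have : g = fun s => (qC s * f s - qE s * f s) - lam * κ * ((cC s - cE s) * f s) := by
      funext s; simp only [hg]; ring
    rw [this]
    exact (hIqC.sub hIqE).sub (hIΔC.const_mul (lam * κ))
  -- sign of g
  have hgpos : ∀ s, s < τstar → 0 < g s := by
    intro s hs
    have h1 : lam * κ < (qC s - qE s) / (cC s - cE s) := hτstar ▸ hρanti hs
    have h2 := (lt_div_iff₀ (hΔC s)).mp h1
    exact mul_pos (by linarith) (hfpos s)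
  have hgneg : ∀ s, τstar < s → g s < 0 := by
    intro s hs
    have h1 : (qC s - qE s) / (cC s - cE s) < lam * κ := hτstar ▸ hρanti hs
    have h2 := (div_lt_iff₀ (hΔC s)).mp h1
    exact mul_neg_of_neg_of_pos (by linarith) (hfpos s)
  -- Jκ as constant plus ∫_{Iic τ} g
  have hJ : ∀ τ : ℝ, Jκ τ =
      ((∫ s, qE s * f s) - lam * ∫ s, cE s * f s) + ∫ s in Iic τ, g s := by
    intro τ
    have hIio : ∀ (h : ℝ → ℝ), (∫ s in Iio τ, h s) = ∫ s in Iic τ, h s := fun h =>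
      setIntegral_congr_set Iio_ae_eq_Iic
    have hIoiq : (∫ s in Ioi τ, qE s * f s) = (∫ s, qE s * f s) - ∫ s in Iic τ, qE s * f s := by
      have := intervalIntegral.integral_Iic_add_Ioi (μ := volume) (b := τ) hIqE.integrableOn hIqE.integrableOn
      linarith
    have hIoic : (∫ s in Ioi τ, cE s * f s) = (∫ s, cE s * f s) - ∫ s in Iic τ, cE s * f s := by
      have := intervalIntegral.integral_Iic_add_Ioi (μ := volume) (b := τ) hIcE.integrableOn hIcE.integrableOn
      linarith
    have hsplit : (∫ s in Iic τ, (cE s + κ * (cC s - cE s)) * f s)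
        = (∫ s in Iic τ, cE s * f s) + κ * ∫ s in Iic τ, (cC s - cE s) * f s := by
      rw [← integral_const_mul, ← integral_add hIcE.integrableOn
        ((hIΔC.const_mul κ).integrableOn)]
      congr 1; funext s; ring
    have hsplit2 : (∫ s in Iic τ, g s)
        = ((∫ s in Iic τ, qC s * f s) - ∫ s in Iic τ, qE s * f s)
          - lam * κ * ∫ s in Iic τ, (cC s - cE s) * f s := by
      have h0 : (∫ s in Iic τ, g s)
          = ∫ s in Iic τ, (qC s * f s - qE s * f s - lam * κ * ((cC s - cE s) * f s)) := by
        congr 1; funext s; simp only [hg]; ring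
      rw [h0, integral_sub ((show Integrable (fun s => qC s * f s - qE s * f s) volume from
        hIqC.sub hIqE).integrableOn)
        ((hIΔC.const_mul (lam * κ)).integrableOn),
        integral_sub hIqC.integrableOn hIqE.integrableOn, integral_const_mul]
    simp only [Jκ, Cκ, hIio, hIoiq, hIoic, hsplit, hsplit2]
    ring
  -- difference as interval integral
  have hdiff : ∀ τ : ℝ, Jκ τ - Jκ τstar = ∫ s in τstar..τ, g s := by
    intro τ
    rw [hJ τ, hJ τstar,
      ← intervalIntegral.integral_Iic_sub_Iic hgint.integrableOn hgint.integrableOn]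
    ring
  constructor
  · intro τ hτ
    rcases lt_or_gt_of_ne hτ with h | h
    · have hpos : 0 < ∫ s in τ..τstar, g s :=
        intervalIntegral.intervalIntegral_pos_of_pos_on (hgcont.intervalIntegrable _ _)
          (fun x hx => hgpos x hx.2) h
      have hd := hdiff τ
      rw [intervalIntegral.integral_symm τ τstar] at hd
      linarith
    · have hpos : 0 < ∫ s in τstar..τ, -(g s) :=
        intervalIntegral.intervalIntegral_pos_of_pos_on ((hgcont.neg).intervalIntegrable _ _)
          (fun x hx => neg_pos.mpr (hgneg x hx.1)) h
      rw [intervalIntegral.integral_neg] at hpos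
      have := hdiff τ
      linarith
  · intro τ
    constructor
    · intro h
      have : (qC τ - qE τ) / (cC τ - cE τ) = lam * κ := by
        rw [h, mul_div_assoc, div_self (hΔC τ).ne', mul_one]
      exact hρanti.injective (this.trans hτstar.symm)
    · intro h
      rw [h]
      have := (div_eq_iff (hΔC τstar).ne').mp hτstar
      linarith
end
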